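/- Let n ≥ 1, let X = {x ∈ ℝ^{n+2} : x₀ = x_{n+1} = 0} with norm ‖x‖₁ = (Σ_{k=1}^{n+1}(x_k − x_{k−1})²)^{1/2}, and let γ > 0 satisfy (Σ_{k=1}^n x_k²)^{1/2} ≤ γ‖x‖₁ for all x ∈ X. Let K : [0,∞) → ℝ be continuous and suppose there exist η₁, η₂ > 0 with ∫₀ᵗ K(s)ds ≥ η₁ t − η₂ for all t ≥ 0. Let f₁,…,f_n : ℝ → ℝ be continuous and η₃ > 0 be such that |∫₀ᵗ f_k(s)ds| ≤ η₃(t² + 1) for all t ∈ ℝ and all k. Define Q(x) = (1/2)∫₀^{‖x‖₁²} K(s)ds and ψ(x) = (∫₀^{x₁} f₁(s)ds, …, ∫₀^{x_n} f_n(s)ds). Then for every μ ∈ ℝⁿ with Euclidean norm ‖μ‖₂ < η₁/(2η₃γ²), the functional x ↦ Q(x) − ⟨ψ(x), μ⟩₂ on X satisfies Q(x) − ⟨ψ(x), μ⟩₂ ≥ (η₁/2)‖x‖₁² − ‖μ‖₂ η₃(γ²‖x‖₁² + n) − η₂/2 for all x ∈ X, and in particular Q(x) − ⟨ψ(x), μ⟩₂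 → +∞ as ‖x‖₁ → +∞. -/
import Mathlib


/-- Coercivity estimate (2.6): with `‖x‖₁² = Σ_{k=1}^{n+1}(x_k − x_{k−1})²`,
`Q(x) = (1/2)∫₀^{‖x‖₁²} K`, `ψ(x) = (∫₀^{x₁} f₁, …, ∫₀^{x_n} f_n)`, and the stated bounds, for
every `μ ∈ ℝⁿ` with `‖μ‖₂ < η₁/(2η₃γ²)` one has
`Q(x) − ⟨ψ(x), μ⟩₂ ≥ (η₁/2)‖x‖₁² − ‖μ‖₂ η₃(γ²‖x‖₁² + n) − η₂/2` on `X`, and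
`Q(x) − ⟨ψ(x), μ⟩₂ → +∞` as `‖x‖₁ → +∞`. -/
theorem coercivity_estimate (n : ℕ) (hn : 1 ≤ n) (γ : ℝ) (hγ : 0 < γ)
    (hpoincare : ∀ x : Fin (n + 2) → ℝ, x 0 = 0 → x (Fin.last (n + 1)) = 0 →
      Real.sqrt (∑ k : Fin n, (x k.succ.castSucc) ^ 2) ≤
        γ * Real.sqrt (∑ k : Fin (n + 1), (x k.succ - x k.castSucc) ^ 2))
    (K : ℝ → ℝ) (hK : ContinuousOn K (Set.Ici 0))
    (η₁ η₂ : ℝ) (hη₁ : 0 < η₁) (hη₂ : 0 < η₂)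
    (hKbound : ∀ t : ℝ, 0 ≤ t → η₁ * t - η₂ ≤ ∫ s in (0 : ℝ)..t, K s)
    (f : Fin n → ℝ → ℝ) (hf : ∀ k, Continuous (f k))
    (η₃ : ℝ) (hη₃ : 0 < η₃)
    (hfbound : ∀ k : Fin n, ∀ t : ℝ, |∫ s in (0 : ℝ)..t, f k s| ≤ η₃ * (t ^ 2 + 1)) :
    ∀ μ : Fin n → ℝ, Real.sqrt (∑ k, (μ k) ^ 2) < η₁ / (2 * η₃ * γ ^ 2) →
      (∀ x : Fin (n + 2) → ℝ, x 0 = 0 → x (Fin.last (n + 1)) = 0 →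
        (1 / 2) * (∫ s in (0 : ℝ)..(∑ h : Fin (n + 1), (x h.succ - x h.castSucc) ^ 2), K s) -
            (∑ k : Fin n, (∫ s in (0 : ℝ)..(x k.succ.castSucc), f k s) * μ k) ≥
          (η₁ / 2) * (∑ h : Fin (n + 1), (x h.succ - x h.castSucc) ^ 2) -
            Real.sqrt (∑ k, (μ k) ^ 2) * η₃ *
              (γ ^ 2 * (∑ h : Fin (n + 1), (x h.succ - x h.castSucc) ^ 2) + n) -
            η₂ / 2) ∧
      (∀ M : ℝ, ∃ R : ℝ, ∀ x : Fin (n + 2) → ℝ, x 0 = 0 → x (Fin.last (n + 1)) = 0 →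
        R ≤ Real.sqrt (∑ h : Fin (n + 1), (x h.succ - x h.castSucc) ^ 2) →
        M ≤ (1 / 2) * (∫ s in (0 : ℝ)..(∑ h : Fin (n + 1), (x h.succ - x h.castSucc) ^ 2), K s) -
            (∑ k : Fin n, (∫ s in (0 : ℝ)..(x k.succ.castSucc), f k s) * μ k)) := by
  intro μ hμ
  set m := Real.sqrt (∑ k, (μ k) ^ 2) with hm
  have hm0 : 0 ≤ m := Real.sqrt_nonneg _
  have hμk : ∀ k, |μ k| ≤ m := by
    intro k
    rw [hm, ← Real.sqrt_sq_eq_abs]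
    exact Real.sqrt_le_sqrt (Finset.single_le_sum (f := fun k => (μ k) ^ 2)
      (fun i _ => sq_nonneg _) (Finset.mem_univ k))
  have main : ∀ x : Fin (n + 2) → ℝ, x 0 = 0 → x (Fin.last (n + 1)) = 0 →
      (1 / 2) * (∫ s in (0 : ℝ)..(∑ h : Fin (n + 1), (x h.succ - x h.castSucc) ^ 2), K s) -
          (∑ k : Fin n, (∫ s in (0 : ℝ)..(x k.succ.castSucc), f k s) * μ k) ≥
        (η₁ / 2) * (∑ h : Fin (n + 1), (x h.succ - x h.castSucc) ^ 2) -
          m * η₃ * (γ ^ 2 * (∑ h : Fin (n + 1), (x h.succ - x h.castSucc) ^ 2) + n) -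
          η₂ / 2 := by
    intro x h0 hl
    set t := ∑ h : Fin (n + 1), (x h.succ - x h.castSucc) ^ 2 with ht
    have ht0 : 0 ≤ t := Finset.sum_nonneg fun i _ => sq_nonneg _
    have hQ : η₁ * t - η₂ ≤ ∫ s in (0 : ℝ)..t, K s := hKbound t ht0
    have hsum0 : 0 ≤ ∑ k : Fin n, (x k.succ.castSucc) ^ 2 :=
      Finset.sum_nonneg fun i _ => sq_nonneg _
    have hP : (∑ k : Fin n, (x k.succ.castSucc) ^ 2) ≤ γ ^ 2 * t := by
      have h1 := hpoincare x h0 hl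
      have h2 : Real.sqrt (∑ k : Fin n, (x k.succ.castSucc) ^ 2) ^ 2 ≤
          (γ * Real.sqrt t) ^ 2 := by
        apply pow_le_pow_left₀ (Real.sqrt_nonneg _) h1
      rw [Real.sq_sqrt hsum0] at h2
      calc (∑ k : Fin n, (x k.succ.castSucc) ^ 2) ≤ (γ * Real.sqrt t) ^ 2 := h2
        _ = γ ^ 2 * (Real.sqrt t) ^ 2 := by ring
        _ = γ ^ 2 * t := by rw [Real.sq_sqrt ht0]
    have hψ : (∑ k : Fin n, (∫ s in (0 : ℝ)..(x k.succ.castSucc), f k s) * μ k) ≤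
        m * η₃ * ((∑ k : Fin n, (x k.succ.castSucc) ^ 2) + n) := by
      have hterm : ∀ k : Fin n, (∫ s in (0 : ℝ)..(x k.succ.castSucc), f k s) * μ k ≤
          m * η₃ * ((x k.succ.castSucc) ^ 2 + 1) := by
        intro k
        calc (∫ s in (0 : ℝ)..(x k.succ.castSucc), f k s) * μ k
            ≤ |∫ s in (0 : ℝ)..(x k.succ.castSucc), f k s| * |μ k| := by
              rw [← abs_mul]; exact le_abs_self _
          _ ≤ (η₃ * ((x k.succ.castSucc) ^ 2 + 1)) * m := by
              apply mul_le_mul (hfbound k _) (hμk k) (abs_nonneg _)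
              positivity
          _ = m * η₃ * ((x k.succ.castSucc) ^ 2 + 1) := by ring
      calc (∑ k : Fin n, (∫ s in (0 : ℝ)..(x k.succ.castSucc), f k s) * μ k)
          ≤ ∑ k : Fin n, m * η₃ * ((x k.succ.castSucc) ^ 2 + 1) :=
            Finset.sum_le_sum fun k _ => hterm k
        _ = m * η₃ * ((∑ k : Fin n, (x k.succ.castSucc) ^ 2) + n) := by
            rw [← Finset.mul_sum, Finset.sum_add_distrib]
            simp [Finset.card_univ]
    have hψ' : (∑ k : Fin n, (∫ s in (0 : ℝ)..(x k.succ.castSucc), f k s) * μ k) ≤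
        m * η₃ * (γ ^ 2 * t + n) := by
      refine hψ.trans ?_
      have : m * η₃ ≥ 0 := by positivity
      nlinarith
    nlinarith
  refine ⟨main, ?_⟩
  intro M
  have hc : 0 < η₁ / 2 - m * η₃ * γ ^ 2 := by
    have h1 : m * (2 * η₃ * γ ^ 2) < η₁ / (2 * η₃ * γ ^ 2) * (2 * η₃ * γ ^ 2) := by
      apply mul_lt_mul_of_pos_right hμ
      positivity
    rw [div_mul_cancel₀] at h1
    · nlinarith
    · positivity
  set c := η₁ / 2 - m * η₃ * γ ^ 2 with hcdef
  set d := m * η₃ * n + η₂ / 2 with hddef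
  refine ⟨Real.sqrt (max 0 ((M + d) / c)), ?_⟩
  intro x h0 hl hR
  set t := ∑ h : Fin (n + 1), (x h.succ - x h.castSucc) ^ 2 with ht
  have ht0 : 0 ≤ t := Finset.sum_nonneg fun i _ => sq_nonneg _
  have htge : (M + d) / c ≤ t := by
    have h1 : Real.sqrt (max 0 ((M + d) / c)) ^ 2 ≤ Real.sqrt t ^ 2 :=
      pow_le_pow_left₀ (Real.sqrt_nonneg _) hR 2
    rw [Real.sq_sqrt (le_max_left _ _), Real.sq_sqrt ht0] at h1
    exact (le_max_right _ _).trans h1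
  have hMd : M + d ≤ c * t := by
    have := (div_le_iff₀ hc).mp htge
    linarith [this]
  have hmain := main x h0 hl
  rw [← ht] at hmain
  have heq : (η₁ / 2) * t - m * η₃ * (γ ^ 2 * t + n) - η₂ / 2 = c * t - d := by
    rw [hcdef, hddef]; ring
  clear_value t c d m
  linarith [hmain, heq]
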